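/- Suppose M satisfies the descending chain condition on direct summands. If M has only finitely many direct summands up to isomorphism, then M has only finitely many direct sum decompositions up to decomposition-isomorphism. -/

import Mathlib

/-- `N` is a direct summand of the module `M`. -/
def IsSummand {R : Type*} [Ring R] {M : Type*} [AddCommGroup M] [Module R M]
    (N : Submodule R M) : Prop :=
  ∃ N', IsCompl N N'

/-- `s` is a direct sum decomposition of `M` into nonzero summands. -/
def IsDecomp {R : Type*} [Ring R] {M : Type*} [AddCommGroup M] [Module R M]
    (s : Set (Submodule R M)) : Prop :=
  sSupIndep s ∧ sSup s = ⊤ ∧ ⊥ ∉ s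

/-- Two decompositions are decomposition-isomorphic: there is a bijection matching
isomorphic summands. -/
def DecompIso {R : Type*} [Ring R] {M : Type*} [AddCommGroup M] [Module R M]
    (s t : Set (Submodule R M)) : Prop :=
  ∃ φ : s ≃ t, ∀ A : s, Nonempty ((A : Submodule R M) ≃ₗ[R] (φ A : Submodule R M))

section Aux

section Lattice
variable {α : Type*} [CompleteLattice α] [IsModularLattice α]

lemma aux_disj_sup_of_disj {a b c : α} (hac : Disjoint a c) (hb : Disjoint b (a ⊔ c)) :
    Disjoint (a ⊔ b) c := by
  rw [disjoint_iff] at hac hb ⊢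
  have h1 : (a ⊔ b) ⊓ (a ⊔ c) = a := by
    rw [sup_inf_assoc_of_le b (le_sup_left : a ≤ a ⊔ c), hb, sup_bot_eq]
  have h2 : (a ⊔ b) ⊓ c ≤ a ⊓ c := by
    have h3 : (a ⊔ b) ⊓ c ≤ (a ⊔ b) ⊓ (a ⊔ c) := inf_le_inf_left _ le_sup_right
    rw [h1] at h3
    exact le_inf h3 inf_le_right
  exact le_bot_iff.mp (hac ▸ h2)

lemma aux_disjoint_sSup_diff {s : Set α} (hs : sSupIndep s) {A : Set α} (hA : A.Finite) :
    A ⊆ s → Disjoint (sSup A) (sSup (s \ A)) := by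
  refine Set.Finite.induction_on (motive := fun A _ => A ⊆ s → Disjoint (sSup A) (sSup (s \ A))) A hA (fun _ => by simp) ?_
  intro b A' hbA' hA' ih hAs
  have hA's : A' ⊆ s := (Set.subset_insert b A').trans hAs
  have hbs : b ∈ s := hAs (Set.mem_insert b A')
  have hac : Disjoint (sSup A') (sSup (s \ insert b A')) :=
    (ih hA's).mono_right (sSup_le_sSup (Set.diff_subset_diff_right (Set.subset_insert b A')))
  have hb : Disjoint b (sSup A' ⊔ sSup (s \ insert b A')) := by
    have h1 : sSup A' ⊔ sSup (s \ insert b A') ≤ sSup (s \ {b}) := by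
      refine sup_le (sSup_le_sSup fun x hx => ⟨hA's hx, fun h => hbA' (h ▸ hx)⟩)
        (sSup_le_sSup (Set.diff_subset_diff_right (by simp)))
    exact (hs hbs).mono_right h1
  rw [sSup_insert, sup_comm]
  exact aux_disj_sup_of_disj hac hb

lemma aux_isCompl_of_within {N N' P Q : α} (h : IsCompl N N') (hP : P ≤ N) (hQ : Q ≤ N)
    (hd : Disjoint P Q) (hsup : P ⊔ Q = N) : IsCompl P (Q ⊔ N') := by
  constructor
  · have h1 : (Q ⊔ N') ⊓ N = Q := by
      rw [sup_inf_assoc_of_le N' hQ, inf_comm, h.inf_eq_bot, sup_bot_eq]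
    rw [disjoint_iff]
    have h2 : P ⊓ (Q ⊔ N') ≤ P ⊓ Q := by
      refine le_inf inf_le_left ?_
      calc P ⊓ (Q ⊔ N') ≤ N ⊓ (Q ⊔ N') := inf_le_inf_right _ hP
      _ = Q := by rw [inf_comm]; exact h1
    rw [disjoint_iff] at hd
    exact le_bot_iff.mp (hd ▸ h2)
  · rw [codisjoint_iff, ← sup_assoc, hsup, h.sup_eq_top]

end Lattice

variable {R : Type*} [Ring R] {M : Type*} [AddCommGroup M] [Module R M]

lemma aux_summand_sSup {s A : Set (Submodule R M)} (hs : IsDecomp s) (hA : A.Finite)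
    (hAs : A ⊆ s) : IsSummand (sSup A) :=
  ⟨sSup (s \ A), ⟨aux_disjoint_sSup_diff hs.1 hA hAs, by
    rw [codisjoint_iff, ← sSup_union, Set.union_diff_cancel hAs, hs.2.1]⟩⟩

lemma aux_summand_mem {s : Set (Submodule R M)} (hs : IsDecomp s) {a : Submodule R M}
    (ha : a ∈ s) : IsSummand a := by
  have h := aux_summand_sSup hs (Set.finite_singleton a) (Set.singleton_subset_iff.mpr ha)
  rwa [sSup_singleton] at h

lemma aux_no_proper_iso_summand
    (hM : ¬ ∃ f : ℕ → Submodule R M, (∀ n, IsSummand (f n)) ∧ ∀ n, f (n + 1) < f n)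
    {N A B : Submodule R M} (hN : IsSummand N) (hA : A ≤ N) (hB : B ≤ N)
    (hd : Disjoint A B) (hsup : A ⊔ B = N) (hBne : B ≠ ⊥)
    (hiso : Nonempty (↥A ≃ₗ[R] ↥N)) : False := by
  obtain ⟨eA⟩ := hiso
  set a : Submodule R ↥N := Submodule.comap N.subtype A with ha
  set b : Submodule R ↥N := Submodule.comap N.subtype B with hb
  have hmapinj := Submodule.map_injective_of_injective N.injective_subtype
  have hab_sup : a ⊔ b = ⊤ := by
    apply hmapinj
    rw [Submodule.map_sup, Submodule.map_comap_subtype, Submodule.map_comap_subtype,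
      Submodule.map_top, Submodule.range_subtype, inf_eq_right.mpr hA, inf_eq_right.mpr hB, hsup]
  have hab_inf : a ⊓ b = ⊥ := by
    rw [ha, hb, ← Submodule.comap_inf, hd.eq_bot, Submodule.comap_bot, Submodule.ker_subtype]
  have hbne : b ≠ ⊥ := by
    intro h
    apply hBne
    have h2 := congrArg (Submodule.map N.subtype) h
    rwa [Submodule.map_comap_subtype, inf_eq_right.mpr hB, Submodule.map_bot] at h2
  have step : ∀ P : Submodule R M, IsSummand P → Nonempty (↥N ≃ₗ[R] ↥P) →
      ∃ P', (IsSummand P' ∧ Nonempty (↥N ≃ₗ[R] ↥P')) ∧ P' < P := by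
    rintro P ⟨C, hC⟩ ⟨e⟩
    set u : ↥N →ₗ[R] M := P.subtype.comp e.toLinearMap with hu_def
    have hu : Function.Injective u := P.injective_subtype.comp e.injective
    have hrange : LinearMap.range u = P := by
      rw [hu_def, LinearMap.range_comp, LinearEquiv.range, Submodule.map_top,
        Submodule.range_subtype]
    set P' : Submodule R M := Submodule.map u a with hP'
    set D' : Submodule R M := Submodule.map u b with hD'
    have hP'le : P' ≤ P := hrange ▸ LinearMap.map_le_range
    have hD'le : D' ≤ P := hrange ▸ LinearMap.map_le_range
    have hsup' : P' ⊔ D' = P := by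
      rw [hP', hD', ← Submodule.map_sup, hab_sup, Submodule.map_top, hrange]
    have hinf' : Disjoint P' D' := by
      rw [disjoint_iff, hP', hD', ← Submodule.map_inf _ hu, hab_inf, Submodule.map_bot]
    have hsummand : IsSummand P' := ⟨D' ⊔ C, aux_isCompl_of_within hC hP'le hD'le hinf' hsup'⟩
    have hiso' : Nonempty (↥N ≃ₗ[R] ↥P') :=
      ⟨eA.symm.trans ((Submodule.comapSubtypeEquivOfLe hA).symm.trans
        (Submodule.equivMapOfInjective u hu a))⟩
    refine ⟨P', ⟨hsummand, hiso'⟩, lt_of_le_of_ne hP'le fun hEq => ?_⟩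
    have ha_top : a = ⊤ := by
      apply Submodule.map_injective_of_injective hu
      rw [Submodule.map_top, hrange, ← hP']
      exact hEq
    rw [ha_top, top_inf_eq] at hab_inf
    exact hbne hab_inf
  apply hM
  let T := {P : Submodule R M // IsSummand P ∧ Nonempty (↥N ≃ₗ[R] ↥P)}
  have step' : ∀ P : T, ∃ P' : T, P'.1 < P.1 := fun P => by
    obtain ⟨P', h1, h2⟩ := step P.1 P.2.1 P.2.2
    exact ⟨⟨P', h1⟩, h2⟩
  choose st hst using step'
  let x0 : T := ⟨N, hN, ⟨LinearEquiv.refl R ↥N⟩⟩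
  refine ⟨fun n => (st^[n] x0).1, fun n => (st^[n] x0).2.1, fun n => ?_⟩
  have h : st^[n+1] x0 = st (st^[n] x0) := Function.iterate_succ_apply' st n x0
  simp only [h]
  exact hst _

lemma aux_decomp_finite
    (hM : ¬ ∃ f : ℕ → Submodule R M, (∀ n, IsSummand (f n)) ∧ ∀ n, f (n + 1) < f n)
    {s : Set (Submodule R M)} (hs : IsDecomp s) : s.Finite := by
  by_contra hinf
  have hinf : s.Infinite := hinf
  let g : ℕ ↪ ↥s := Set.Infinite.natEmbedding s hinf
  let gg : ℕ → Submodule R M := fun n => ((g n : ↥s) : Submodule R M)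
  have gginj : Function.Injective gg := Subtype.coe_injective.comp g.injective
  let A : ℕ → Set (Submodule R M) := fun n => gg '' Set.Iio n
  have hAfin : ∀ n, (A n).Finite := fun n => (Set.finite_Iio n).image _
  have hAsub : ∀ n, A n ⊆ s := by rintro n x ⟨i, _, rfl⟩; exact (g i).2
  let f : ℕ → Submodule R M := fun n => sSup (s \ A n)
  apply hM
  refine ⟨f, fun n => ?_, fun n => ?_⟩
  · exact ⟨sSup (A n), (aux_disjoint_sSup_diff hs.1 (hAfin n) (hAsub n)).symm, by
      rw [codisjoint_iff, ← sSup_union, Set.diff_union_of_subset (hAsub n), hs.2.1]⟩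
  · have hle : f (n + 1) ≤ f n := sSup_le_sSup (Set.diff_subset_diff_right
      (Set.image_mono (fun i (hi : i < n) => Nat.lt_succ_of_lt hi)))
    refine lt_of_le_of_ne hle fun heq => ?_
    have hxs : gg n ∈ s := (g n).2
    have hxA : gg n ∉ A n := by
      rintro ⟨i, hi, hgi⟩
      exact absurd (gginj hgi) (Nat.ne_of_lt hi)
    have hxle : gg n ≤ f n := le_sSup ⟨hxs, hxA⟩
    have hsub : s \ A (n + 1) ⊆ s \ {gg n} :=
      Set.diff_subset_diff_right (Set.singleton_subset_iff.mpr ⟨n, Nat.lt_succ_self n, rfl⟩)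
    have hxle2 : gg n ≤ sSup (s \ {gg n}) := by
      calc gg n ≤ f (n + 1) := heq ▸ hxle
      _ ≤ sSup (s \ {gg n}) := sSup_le_sSup hsub
    have hdisj := hs.1 hxs
    rw [disjoint_iff] at hdisj
    have hbot : gg n = ⊥ := le_bot_iff.mp (hdisj ▸ le_inf le_rfl hxle2)
    exact hs.2.2 (hbot ▸ hxs)

lemma aux_decompIso_of_card_fibers_eq {s t : Set (Submodule R M)}
    (hsf : s.Finite) (htf : t.Finite) (c : Submodule R M → Submodule R M)
    (hCs : ∀ a : s, Nonempty ((a : Submodule R M) ≃ₗ[R] ↥(c a)))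
    (hCt : ∀ b : t, Nonempty ((b : Submodule R M) ≃ₗ[R] ↥(c b)))
    (hσ : ∀ T, Nat.card {x : s // c ↑x = T} = Nat.card {y : t // c ↑y = T}) :
    DecompIso s t := by
  haveI := hsf.to_subtype
  haveI := htf.to_subtype
  have hE : ∀ T, Nonempty ({x : s // c ↑x = T} ≃ {y : t // c ↑y = T}) := fun T =>
    Finite.card_eq.mp (hσ T)
  let E : ∀ T, {x : s // c ↑x = T} ≃ {y : t // c ↑y = T} := fun T => (hE T).some
  let φ : s ≃ t :=
    (Equiv.sigmaFiberEquiv fun x : s => c ↑x).symm.trans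
      ((Equiv.sigmaCongrRight E).trans (Equiv.sigmaFiberEquiv fun y : t => c ↑y))
  refine ⟨φ, fun A => ?_⟩
  have h2 : c ↑(φ A) = c ↑A := (E (c ↑A) ⟨A, rfl⟩).2
  obtain ⟨e1⟩ := hCs A
  obtain ⟨e2⟩ := hCt (φ A)
  rw [h2] at e2
  exact ⟨e1.trans e2.symm⟩

end Aux

/-- Suppose `M` satisfies the descending chain condition on direct summands. If `M` has
only finitely many direct summands up to isomorphism, then `M` has only finitely many
direct sum decompositions up to decomposition-isomorphism. -/
theorem finitely_many_decomps_of_finitely_many_summands {R : Type*} [Ring R] {M : Type*}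
    [AddCommGroup M] [Module R M]
    (hM : ¬ ∃ f : ℕ → Submodule R M, (∀ n, IsSummand (f n)) ∧ ∀ n, f (n + 1) < f n)
    (hfin : ∃ F : Set (Submodule R M), F.Finite ∧
      ∀ N : Submodule R M, IsSummand N → ∃ T ∈ F, Nonempty (N ≃ₗ[R] T)) :
    ∃ F : Set (Set (Submodule R M)), F.Finite ∧
      ∀ s : Set (Submodule R M), IsDecomp s → ∃ t ∈ F, DecompIso s t := by
  classical
  obtain ⟨F₀, hF₀fin, hF₀⟩ := hfin
  -- the classifying choice function
  let c : Submodule R M → Submodule R M := fun P =>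
    if h : ∃ T, T ∈ F₀ ∧ Nonempty (↥P ≃ₗ[R] ↥T) then h.choose else ⊥
  have hc : ∀ P : Submodule R M, IsSummand P →
      c P ∈ F₀ ∧ Nonempty (↥P ≃ₗ[R] ↥(c P)) := by
    intro P hP
    have h : ∃ T, T ∈ F₀ ∧ Nonempty (↥P ≃ₗ[R] ↥T) := hF₀ P hP
    have he : c P = h.choose := dif_pos h
    rw [he]
    exact h.choose_spec
  set Ft : Finset (Submodule R M) := hF₀fin.toFinset with hFt
  set k : ℕ := Ft.card with hk
  have hfinite : ∀ s : Set (Submodule R M), IsDecomp s → s.Finite :=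
    fun s hs => aux_decomp_finite hM hs
  -- the size of any decomposition is at most `k`
  have hbound : ∀ s : Set (Submodule R M), IsDecomp s → Nat.card ↥s ≤ k := by
    intro s hs
    by_contra hcon
    push_neg at hcon
    have hsf := hfinite s hs
    haveI := hsf.fintype
    rw [Nat.card_eq_fintype_card] at hcon
    set n := Fintype.card ↥s with hn
    let eqv : Fin n ≃ ↥s := (Fintype.equivFin ↥s).symm
    let g : Fin n → Submodule R M := fun i => ((eqv i : ↥s) : Submodule R M)
    have ginj : Function.Injective g := Subtype.coe_injective.comp eqv.injective
    let Aset : ℕ → Set (Submodule R M) := fun m => g '' {i : Fin n | (i : ℕ) < m}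
    let NN : ℕ → Submodule R M := fun m => sSup (Aset m)
    have hAfin : ∀ m, (Aset m).Finite := fun m => Set.Finite.image g (Set.toFinite _)
    have hAsub : ∀ m, Aset m ⊆ s := by rintro m x ⟨i, _, rfl⟩; exact (eqv i).2
    have hNsummand : ∀ m, IsSummand (NN m) := fun m =>
      aux_summand_sSup hs (hAfin m) (hAsub m)
    let fc : Fin n → ↥Ft := fun i =>
      ⟨c (NN ((i : ℕ) + 1)), hF₀fin.mem_toFinset.mpr (hc _ (hNsummand _)).1⟩
    have hcard : Fintype.card ↥Ft < Fintype.card (Fin n) := by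
      rw [Fintype.card_coe, Fintype.card_fin]
      exact hcon
    obtain ⟨i, j, hne, heq⟩ := Fintype.exists_ne_map_eq_of_card_lt fc hcard
    have key : ∀ i j : Fin n, (i : ℕ) < (j : ℕ) → fc i = fc j → False := by
      intro i j hij heq
      let Dset : Set (Submodule R M) := g '' {l : Fin n | (i : ℕ) < (l : ℕ) ∧ (l : ℕ) < (j : ℕ) + 1}
      have hunion : Aset ((i : ℕ) + 1) ∪ Dset = Aset ((j : ℕ) + 1) := by
        have hsets : {l : Fin n | (l : ℕ) < (i : ℕ) + 1} ∪
            {l : Fin n | (i : ℕ) < (l : ℕ) ∧ (l : ℕ) < (j : ℕ) + 1} =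
            {l : Fin n | (l : ℕ) < (j : ℕ) + 1} := by
          ext l
          show ((l : ℕ) < (i : ℕ) + 1 ∨ ((i : ℕ) < (l : ℕ) ∧ (l : ℕ) < (j : ℕ) + 1)) ↔
            (l : ℕ) < (j : ℕ) + 1
          omega
        show g '' {l : Fin n | (l : ℕ) < (i : ℕ) + 1} ∪
            g '' {l : Fin n | (i : ℕ) < (l : ℕ) ∧ (l : ℕ) < (j : ℕ) + 1} =
            g '' {l : Fin n | (l : ℕ) < (j : ℕ) + 1}
        rw [← Set.image_union, hsets]
      have hPD : NN ((i : ℕ) + 1) ⊔ sSup Dset = NN ((j : ℕ) + 1) := by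
        rw [← sSup_union, hunion]
      have hDsub : Dset ⊆ s \ Aset ((i : ℕ) + 1) := by
        rintro x ⟨l, ⟨hl1, _⟩, rfl⟩
        refine ⟨(eqv l).2, ?_⟩
        rintro ⟨l', hl', hgl⟩
        have hll : l' = l := ginj hgl
        rw [hll] at hl'
        simp only [Set.mem_setOf_eq] at hl'
        omega
      have hdisj : Disjoint (NN ((i : ℕ) + 1)) (sSup Dset) :=
        (aux_disjoint_sSup_diff hs.1 (hAfin _) (hAsub _)).mono_right (sSup_le_sSup hDsub)
      have hDne : sSup Dset ≠ ⊥ := by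
        have hj : g j ∈ Dset := ⟨j, ⟨hij, Nat.lt_succ_self _⟩, rfl⟩
        intro hbot
        have h1 : g j ≤ ⊥ := hbot ▸ le_sSup hj
        have h2 : g j = ⊥ := le_bot_iff.mp h1
        exact hs.2.2 (h2 ▸ (eqv j).2)
      have hPle : NN ((i : ℕ) + 1) ≤ NN ((j : ℕ) + 1) :=
        sSup_le_sSup (Set.image_mono
          (fun l (hl : (l : ℕ) < (i : ℕ) + 1) => show (l : ℕ) < (j : ℕ) + 1 by omega))
      have hDle : sSup Dset ≤ NN ((j : ℕ) + 1) := hPD ▸ le_sup_right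
      have hcPQ : c (NN ((i : ℕ) + 1)) = c (NN ((j : ℕ) + 1)) := congrArg Subtype.val heq
      have hiso : Nonempty (↥(NN ((i : ℕ) + 1)) ≃ₗ[R] ↥(NN ((j : ℕ) + 1))) := by
        obtain ⟨e1⟩ := (hc _ (hNsummand ((i : ℕ) + 1))).2
        obtain ⟨e2⟩ := (hc _ (hNsummand ((j : ℕ) + 1))).2
        rw [← hcPQ] at e2
        exact ⟨e1.trans e2.symm⟩
      exact aux_no_proper_iso_summand hM (hNsummand ((j : ℕ) + 1)) hPle hDle hdisj hPD hDne hiso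
    have hvne : (i : ℕ) ≠ (j : ℕ) := fun hv => hne (Fin.ext hv)
    rcases hvne.lt_or_gt with h' | h'
    · exact key i j h' heq
    · exact key j i h' heq.symm
  -- the signature of a decomposition
  let σ : Set (Submodule R M) → Submodule R M → ℕ := fun s T =>
    Nat.card {x : s // c ↑x = T}
  have hσ_le : ∀ s : Set (Submodule R M), IsDecomp s → ∀ T, σ s T ≤ k := by
    intro s hs T
    haveI := (hfinite s hs).to_subtype
    exact le_trans (Finite.card_subtype_le _) (hbound s hs)
  have hσ_supp : ∀ s : Set (Submodule R M), IsDecomp s → ∀ T, T ∉ F₀ → σ s T = 0 := by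
    intro s hs T hT
    haveI : IsEmpty {x : s // c ↑x = T} :=
      ⟨fun x => hT (x.2 ▸ (hc _ (aux_summand_mem hs x.1.2)).1)⟩
    exact Nat.card_of_isEmpty
  set Sig : Set (Submodule R M → ℕ) := σ '' {s | IsDecomp s} with hSig_def
  have hSigfin : Sig.Finite := by
    let ι : (Submodule R M → ℕ) → (↥Ft → Fin (k + 1)) := fun f T =>
      ⟨min (f ↑T) k, Nat.lt_succ_of_le (min_le_right _ _)⟩
    have hinj : Set.InjOn ι Sig := by
      rintro f ⟨sf, hsf, rfl⟩ gph ⟨sg, hsg, rfl⟩ hfg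
      funext T
      by_cases hT : T ∈ F₀
      · have h1 := congrFun hfg ⟨T, hF₀fin.mem_toFinset.mpr hT⟩
        simp only [ι, Fin.mk.injEq] at h1
        have h2 := hσ_le sf hsf T
        have h3 := hσ_le sg hsg T
        omega
      · rw [hσ_supp sf hsf T hT, hσ_supp sg hsg T hT]
    exact Set.Finite.of_finite_image (Set.toFinite _) hinj
  let rep : (Submodule R M → ℕ) → Set (Submodule R M) := fun f =>
    if h : ∃ s, IsDecomp s ∧ σ s = f then h.choose else ∅
  refine ⟨rep '' Sig, hSigfin.image rep, ?_⟩
  intro s hs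
  have hex : ∃ s', IsDecomp s' ∧ σ s' = σ s := ⟨s, hs, rfl⟩
  have hrep : rep (σ s) = hex.choose := dif_pos hex
  obtain ⟨ht, hσt⟩ := hex.choose_spec
  refine ⟨rep (σ s), ⟨σ s, ⟨s, hs, rfl⟩, rfl⟩, ?_⟩
  rw [hrep]
  exact aux_decompIso_of_card_fibers_eq (hfinite s hs) (hfinite _ ht) c
    (fun a => (hc _ (aux_summand_mem hs a.2)).2)
    (fun b => (hc _ (aux_summand_mem ht b.2)).2)
    (fun T => (congrFun hσt T).symm)
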